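/- Let N ≥ 1, let λ_1,…,λ_N > 0, let β > 1 and let B be a positive integer. Let Z_1,…,Z_N be independent random variables, Z_i exponentially distributed with rate λ_i, and define D = min_{i} max(B + ⌊log_β Z_i⌋, 0). Then E[D] ≤ 1 + Γ(0, λ β^{−B}) / ln β, where λ = ∑_{i=1}^N λ_i and Γ(0, x) = ∫_x^∞ t^{−1} e^{−t} dt is the upper incomplete gamma function. -/

import Mathlib

open MeasureTheory ProbabilityTheory

/-- The upper incomplete gamma function at `0`: `Γ(0, x) = ∫_x^∞ t⁻¹ e^{-t} dt`. -/
noncomputable def upperGamma0 (x : ℝ) : ℝ := ∫ t in Set.Ioi x, t⁻¹ * Real.exp (-t)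

open Set Real Filter

private lemma measurable_finset_inf'' {Ω ι : Type*} [MeasurableSpace Ω] {s : Finset ι}
    (hs : s.Nonempty) (f : ι → Ω → ℤ) (hf : ∀ i, Measurable (f i)) :
    Measurable (fun ω => s.inf' hs (fun i => f i ω)) := by
  induction hs using Finset.Nonempty.cons_induction with
  | singleton a => simpa using hf a
  | cons a t ha hts ih =>
    have : (fun ω => (Finset.cons a t ha).inf' (Finset.cons_nonempty ha) (fun i => f i ω))
        = fun ω => min (f a ω) (t.inf' hts fun i => f i ω) := by
      funext ω; exact Finset.inf'_cons hts (fun i => f i ω)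
    rw [this]
    exact (hf a).min ih

private lemma expMeasure_Iic' {r : ℝ} (hr : 0 < r) (x : ℝ) :
    expMeasure r (Iic x) = ENNReal.ofReal (if 0 ≤ x then 1 - Real.exp (-(r * x)) else 0) := by
  rw [show expMeasure r = volume.withDensity (exponentialPDF r) from rfl,
    withDensity_apply _ measurableSet_Iic]
  exact lintegral_exponentialPDF_eq_antiDeriv hr x

private lemma expMeasure_Ici' {r : ℝ} (hr : 0 < r) {x : ℝ} (hx : 0 ≤ x) :
    expMeasure r (Ici x) = ENNReal.ofReal (Real.exp (-(r * x))) := by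
  have hprob : IsProbabilityMeasure (expMeasure r) := isProbabilityMeasure_expMeasure hr
  have hIoi : expMeasure r (Ioi x) = ENNReal.ofReal (Real.exp (-(r * x))) := by
    have hcompl : expMeasure r (Ioi x) = 1 - expMeasure r (Iic x) := by
      rw [← Set.compl_Iic, measure_compl measurableSet_Iic (measure_ne_top _ _), measure_univ]
    have he1 : Real.exp (-(r * x)) ≤ 1 := Real.exp_le_one_iff.mpr (by nlinarith)
    rw [hcompl, expMeasure_Iic' hr, if_pos hx, ← ENNReal.ofReal_one,
      ← ENNReal.ofReal_sub _ (by nlinarith [Real.exp_pos (-(r * x))])]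
    norm_num
  have hsing : expMeasure r {x} = 0 := by
    rw [show expMeasure r = volume.withDensity (exponentialPDF r) from rfl]
    exact (withDensity_absolutelyContinuous _ _) (measure_singleton x)
  rw [← hIoi]
  refine le_antisymm ?_ (measure_mono Ioi_subset_Ici_self)
  calc expMeasure r (Ici x) = expMeasure r ({x} ∪ Ioi x) := by
        rw [show ({x} : Set ℝ) ∪ Ioi x = Ici x by
          ext y; simp [le_iff_lt_or_eq, or_comm, eq_comm]]
    _ ≤ expMeasure r {x} + expMeasure r (Ioi x) := measure_union_le _ _
    _ = expMeasure r (Ioi x) := by rw [hsing, zero_add]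

private lemma expMeasure_Iic_zero {r : ℝ} (hr : 0 < r) : expMeasure r (Iic 0) = 0 := by
  rw [expMeasure_Iic' hr]; norm_num



/-- **Theorem 4 of the paper.** With independent exponential timers `Z i` of
rates `λ i`, the expected minimum discrete backoff timer
`D = min_i max (B + ⌊log_β (Z i)⌋) 0` satisfies
`E[D] ≤ 1 + Γ(0, λ β^{-B}) / ln β` where `λ = ∑ i, lam i`. -/
theorem expected_backoff_overhead_le
    {Ω : Type*} [MeasurableSpace Ω] (μ : Measure Ω) [IsProbabilityMeasure μ]
    (N : ℕ) (hN : 1 ≤ N)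
    (lam : Fin N → ℝ) (hlam : ∀ i, 0 < lam i)
    (β : ℝ) (hβ : 1 < β) (B : ℕ) (hB : 0 < B)
    (Z : Fin N → Ω → ℝ) (hZmeas : ∀ i, Measurable (Z i))
    (hindep : iIndepFun Z μ)
    (hlaw : ∀ i, Measure.map (Z i) μ = expMeasure (lam i)) :
    ∫ ω, ((Finset.univ.inf' ⟨⟨0, hN⟩, Finset.mem_univ _⟩
          fun i => max ((B : ℤ) + ⌊Real.logb β (Z i ω)⌋) 0 : ℤ) : ℝ) ∂μ
      ≤ 1 + upperGamma0 ((∑ i, lam i) * β ^ (-(B : ℝ))) / Real.log β := by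
  classical
  have hβ0 : (0:ℝ) < β := lt_trans one_pos hβ
  set c : ℝ := Real.log β with hc_def
  have hc : 0 < c := Real.log_pos hβ
  set lam0 : ℝ := ∑ i, lam i with hlam0_def
  have hne : (Finset.univ : Finset (Fin N)).Nonempty := ⟨⟨0, hN⟩, Finset.mem_univ _⟩
  have hlam0 : 0 < lam0 := Finset.sum_pos (fun i _ => hlam i) hne
  set D : Fin N → Ω → ℤ := fun i ω => max ((B : ℤ) + ⌊Real.logb β (Z i ω)⌋) 0 with hD_def
  set f : Ω → ℝ := fun ω =>
    ((Finset.univ.inf' (⟨⟨0, hN⟩, Finset.mem_univ _⟩ : (Finset.univ : Finset (Fin N)).Nonempty)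
      fun i => D i ω : ℤ) : ℝ) with hf_def
  show ∫ ω, f ω ∂μ ≤ 1 + upperGamma0 (lam0 * β ^ (-(B : ℝ))) / c
  -- measurability
  have hDmeas : ∀ i, Measurable (D i) := by
    intro i
    have h1 : Measurable fun ω => Real.logb β (Z i ω) := by
      simp only [Real.logb]
      exact (Real.measurable_log.comp (hZmeas i)).div_const _
    exact (measurable_const.add h1.floor).max measurable_const
  have hfmeas : Measurable f := by
    exact (measurable_of_countable _).comp
      (measurable_finset_inf'' hne D hDmeas)
  have hf_nonneg : ∀ ω, 0 ≤ f ω := by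
    intro ω
    have : (0:ℤ) ≤ Finset.univ.inf'
        (⟨⟨0, hN⟩, Finset.mem_univ _⟩ : (Finset.univ : Finset (Fin N)).Nonempty)
        fun i => D i ω :=
      Finset.le_inf' _ _ (fun i _ => le_max_right _ _)
    simp only [hf_def]
    exact_mod_cast this
  -- a.e. positivity of the Z i
  have hpos : ∀ᵐ ω ∂μ, ∀ i, 0 < Z i ω := by
    rw [MeasureTheory.ae_all_iff]
    intro i
    have h0 : μ (Z i ⁻¹' Iic 0) = 0 := by
      rw [← Measure.map_apply (hZmeas i) measurableSet_Iic, hlaw i,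
        expMeasure_Iic_zero (hlam i)]
    rw [ae_iff]
    convert h0 using 2
    ext ω; simp
  -- the dominating function
  set G : ℝ → ℝ := fun t => Real.exp (-(lam0 * Real.exp ((t - (B:ℝ)) * c))) with hG_def
  have hGcont : Continuous G := by fun_prop
  have hGpos : ∀ t, 0 < G t := fun t => Real.exp_pos _
  have hGle1 : ∀ t, G t ≤ 1 := by
    intro t
    apply Real.exp_le_one_iff.mpr
    have := Real.exp_pos ((t - (B:ℝ)) * c)
    nlinarith
  -- tail bound
  have tail : ∀ t : ℝ, t ∈ Ioi (0:ℝ) → μ {ω | t < f ω} ≤ ENNReal.ofReal (G t) := by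
    intro t ht
    rw [mem_Ioi] at ht
    set v : ℝ := Real.exp ((t - (B:ℝ)) * c) with hv_def
    have hv : 0 < v := Real.exp_pos _
    have hvr : β ^ (t - (B:ℝ)) = v := by
      rw [Real.rpow_def_of_pos hβ0, hv_def, mul_comm]
    have hsub : {ω | t < f ω} ∩ {ω | ∀ i, 0 < Z i ω} ⊆ ⋂ i, Z i ⁻¹' Ici v := by
      rintro ω ⟨hωt, hωpos⟩
      refine Set.mem_iInter.2 fun i => ?_
      have hle : f ω ≤ ((D i ω : ℤ) : ℝ) := by
        have h0 : (Finset.univ.inf'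
            (⟨⟨0, hN⟩, Finset.mem_univ _⟩ : (Finset.univ : Finset (Fin N)).Nonempty)
            fun j => D j ω) ≤ D i ω := Finset.inf'_le _ (Finset.mem_univ i)
        simp only [hf_def]
        exact_mod_cast h0
      have h2 : t < ((D i ω : ℤ) : ℝ) := lt_of_lt_of_le hωt hle
      have h3 : t - (B:ℝ) < (⌊Real.logb β (Z i ω)⌋ : ℝ) := by
        rcases le_or_gt ((B:ℤ) + ⌊Real.logb β (Z i ω)⌋) 0 with hcase | hcase
        · exfalso
          have : D i ω = 0 := max_eq_right hcase
          rw [this] at h2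
          norm_num at h2
          linarith
        · have hD : D i ω = (B:ℤ) + ⌊Real.logb β (Z i ω)⌋ := max_eq_left hcase.le
          rw [hD] at h2
          push_cast at h2
          linarith
      have h4 : t - (B:ℝ) < Real.logb β (Z i ω) :=
        lt_of_lt_of_le h3 (Int.floor_le _)
      have h5 : β ^ (t - (B:ℝ)) < Z i ω :=
        (Real.lt_logb_iff_rpow_lt hβ (hωpos i)).mp h4
      rw [hvr] at h5
      exact h5.le
    calc μ {ω | t < f ω} = μ ({ω | t < f ω} ∩ {ω | ∀ i, 0 < Z i ω}) := by
          refine (measure_inter_conull ?_).symm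
          have : {ω | ∀ i, 0 < Z i ω}ᶜ = {ω | ¬ ∀ i, 0 < Z i ω} := rfl
          rw [this, ← ae_iff]
          exact hpos
      _ ≤ μ (⋂ i, Z i ⁻¹' Ici v) := measure_mono hsub
      _ = ∏ i, μ (Z i ⁻¹' Ici v) :=
          hindep.meas_iInter fun i => ⟨Ici v, measurableSet_Ici, rfl⟩
      _ = ∏ i, ENNReal.ofReal (Real.exp (-(lam i * v))) := by
          refine Finset.prod_congr rfl fun i _ => ?_
          rw [← Measure.map_apply (hZmeas i) measurableSet_Ici, hlaw i,
            expMeasure_Ici' (hlam i) hv.le]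
      _ = ENNReal.ofReal (G t) := by
          rw [← ENNReal.ofReal_prod_of_nonneg fun i _ => (Real.exp_pos _).le,
            ← Real.exp_sum]
          congr 1
          rw [hG_def]
          simp only [← hv_def]
          rw [hlam0_def, Finset.sum_mul]
          simp
  -- integrability of G on Ioi 0
  have hGint : IntegrableOn G (Ioi (0:ℝ)) := by
    have hbound : IntegrableOn (fun t => Real.exp (lam0 * c * (B:ℝ)) *
        Real.exp (-(lam0 * c) * t)) (Ioi (0:ℝ)) :=
      (exp_neg_integrableOn_Ioi 0 (mul_pos hlam0 hc)).const_mul _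
    refine Integrable.mono' hbound hGcont.aestronglyMeasurable.restrict
      (Filter.Eventually.of_forall fun x => ?_)
    rw [Real.norm_eq_abs, abs_of_pos (hGpos x), hG_def]
    simp only
    rw [← Real.exp_add]
    apply Real.exp_le_exp.mpr
    nlinarith [Real.add_one_le_exp ((x - (B:ℝ)) * c), hlam0.le]
  -- change of variables on Ioi 1
  set φ : ℝ → ℝ := fun t => lam0 * Real.exp ((t - (B:ℝ)) * c) with hφ_def
  have hφpos : ∀ t, 0 < φ t := fun t => mul_pos hlam0 (Real.exp_pos _)
  have hφmono : StrictMono φ := by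
    intro a b hab
    exact mul_lt_mul_of_pos_left
      (Real.exp_lt_exp.mpr (by nlinarith)) hlam0
  have hx0 : lam0 * β ^ (-(B:ℝ)) = φ 0 := by
    rw [hφ_def]
    simp only
    rw [Real.rpow_def_of_pos hβ0]
    rw [hc_def]
    ring_nf
  have hφd : ∀ x : ℝ, HasDerivAt φ (lam0 * (Real.exp ((x - (B:ℝ)) * c) * c)) x := by
    intro x
    have h1 : HasDerivAt (fun t : ℝ => (t - (B:ℝ)) * c) (1 * c) x :=
      ((hasDerivAt_id x).sub_const _).mul_const c
    have h2 := (h1.exp).const_mul lam0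
    simpa using h2
  have hIoi1 : ∫ t in Ioi (1:ℝ), G t = upperGamma0 (φ 1) / c := by
    have himg : φ '' Ioi 1 = Ioi (φ 1) := by
      ext u
      constructor
      · rintro ⟨s, hs, rfl⟩
        exact hφmono hs
      · intro hu
        rw [mem_Ioi] at hu
        have hu0 : 0 < u := lt_trans (hφpos 1) hu
        refine ⟨(B:ℝ) + Real.log (u / lam0) / c, ?_, ?_⟩
        · rw [mem_Ioi]
          have h1 : Real.exp ((1 - (B:ℝ)) * c) < u / lam0 := by
            rw [lt_div_iff₀ hlam0]
            calc Real.exp ((1 - (B:ℝ)) * c) * lam0 = φ 1 := by rw [hφ_def]; ring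
              _ < u := hu
          have h2 : (1 - (B:ℝ)) * c < Real.log (u / lam0) :=
            (Real.lt_log_iff_exp_lt (div_pos hu0 hlam0)).mpr h1
          have h3 : 1 - (B:ℝ) < Real.log (u / lam0) / c := (lt_div_iff₀ hc).mpr (by linarith)
          linarith
        · rw [hφ_def]
          simp only
          rw [add_sub_cancel_left, div_mul_cancel₀ _ (ne_of_gt hc),
            Real.exp_log (div_pos hu0 hlam0), mul_div_cancel₀ _ (ne_of_gt hlam0)]
    have hchange := integral_image_eq_integral_abs_deriv_smul (s := Ioi (1:ℝ)) measurableSet_Ioi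
      (fun x _ => (hφd x).hasDerivWithinAt) (hφmono.injective.injOn)
      (fun u => u⁻¹ * Real.exp (-u))
    rw [himg] at hchange
    have hRHS : ∫ x in Ioi (1:ℝ), |lam0 * (Real.exp ((x - (B:ℝ)) * c) * c)| •
        ((fun u => u⁻¹ * Real.exp (-u)) (φ x)) = c * ∫ t in Ioi (1:ℝ), G t := by
      rw [← MeasureTheory.integral_const_mul]
      refine MeasureTheory.integral_congr_ae (Filter.Eventually.of_forall fun x => ?_)
      have hφx : 0 < φ x := hφpos x
      have hE : Real.exp ((x - (B:ℝ)) * c) ≠ 0 := (Real.exp_pos _).ne'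
      simp only [smul_eq_mul, hφ_def, hG_def]
      rw [abs_of_pos (mul_pos hlam0 (mul_pos (Real.exp_pos _) hc))]
      field_simp
    rw [hRHS] at hchange
    rw [upperGamma0, hchange]
    field_simp
  -- Gamma monotonicity
  have hγint : IntegrableOn (fun u => u⁻¹ * Real.exp (-u)) (Ioi (φ 0)) := by
    have h0 : 0 < φ 0 := hφpos 0
    have hbound : IntegrableOn (fun u => (φ 0)⁻¹ * Real.exp (-1 * u)) (Ioi (φ 0)) :=
      (exp_neg_integrableOn_Ioi _ one_pos).const_mul _
    refine Integrable.mono' hbound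
      ((measurable_id.inv.mul (Real.measurable_exp.comp measurable_neg)).aestronglyMeasurable.restrict) ?_
    rw [ae_restrict_iff' measurableSet_Ioi]
    refine Filter.Eventually.of_forall fun u hu => ?_
    rw [mem_Ioi] at hu
    have hu0 : 0 < u := lt_trans h0 hu
    rw [Real.norm_eq_abs, abs_of_pos (by positivity), neg_one_mul]
    have hinv : u⁻¹ ≤ (φ 0)⁻¹ := by
      apply inv_anti₀ h0 hu.le
    exact mul_le_mul_of_nonneg_right hinv (Real.exp_pos _).le
  have hΓmono : upperGamma0 (φ 1) ≤ upperGamma0 (φ 0) := by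
    refine setIntegral_mono_set hγint ?_ (HasSubset.Subset.eventuallyLE
      (Ioi_subset_Ioi (hφmono zero_lt_one).le))
    rw [Filter.EventuallyLE, ae_restrict_iff' measurableSet_Ioi]
    refine Eventually.of_forall fun u hu => ?_
    have hu0 : 0 < u := lt_trans (hφpos 0) hu
    positivity
  have hΓ0 : 0 ≤ upperGamma0 (φ 0) := by
    refine setIntegral_nonneg measurableSet_Ioi fun u hu => ?_
    have hu0 : 0 < u := lt_trans (hφpos 0) hu
    positivity
  -- bound the real integral over Ioi 0
  have hIoc : ∫ t in Ioc (0:ℝ) 1, G t ≤ 1 := by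
    calc ∫ t in Ioc (0:ℝ) 1, G t ≤ ∫ _t in Ioc (0:ℝ) 1, (1:ℝ) :=
          setIntegral_mono_on (hGint.mono_set Ioc_subset_Ioi_self)
            ((integrableOn_const_iff (C := (1:ℝ))).mpr (Or.inr (by simp [Real.volume_Ioc]))) measurableSet_Ioc
            fun x _ => hGle1 x
      _ = 1 := by simp [Real.volume_Ioc]
  have hsplit : ∫ t in Ioi (0:ℝ), G t = (∫ t in Ioc (0:ℝ) 1, G t) + ∫ t in Ioi (1:ℝ), G t := by
    rw [← setIntegral_union (Ioc_disjoint_Ioi le_rfl) measurableSet_Ioi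
      (hGint.mono_set Ioc_subset_Ioi_self) (hGint.mono_set (Ioi_subset_Ioi zero_le_one)),
      Ioc_union_Ioi_eq_Ioi zero_le_one]
  have hreal : ∫ t in Ioi (0:ℝ), G t ≤ 1 + upperGamma0 (lam0 * β ^ (-(B:ℝ))) / c := by
    rw [hsplit, hIoi1, hx0]
    have h2 : upperGamma0 (φ 1) / c ≤ upperGamma0 (φ 0) / c := by gcongr
    linarith
  -- layer cake assembly
  have hlayer := lintegral_eq_lintegral_meas_lt μ (Eventually.of_forall hf_nonneg)
    hfmeas.aemeasurable
  have hlint_le : ∫⁻ ω, ENNReal.ofReal (f ω) ∂μ ≤ ENNReal.ofReal (∫ t in Ioi (0:ℝ), G t) := by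
    rw [hlayer, ofReal_integral_eq_lintegral_ofReal hGint
      (Eventually.of_forall fun t => (hGpos t).le)]
    exact setLIntegral_mono (ENNReal.measurable_ofReal.comp hGcont.measurable) tail
  rw [integral_eq_lintegral_of_nonneg_ae (Eventually.of_forall hf_nonneg)
    hfmeas.aestronglyMeasurable]
  refine ENNReal.toReal_le_of_le_ofReal ?_ (le_trans hlint_le (ENNReal.ofReal_le_ofReal hreal))
  have : 0 ≤ upperGamma0 (lam0 * β ^ (-(B:ℝ))) := by rw [hx0]; exact hΓ0
  positivity
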